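/- Let p be an odd prime and i, j, n integers with n ≡ 1 - j (mod p-1) and i ≡ j (mod p-1), and let f_{i,j}(T) = T - (1+p)^i + 1 ∈ ℤ_p[T]. Write n + i - 1 = p^k r with p ∤ r (assuming n + i ≠ 1). Then v_p(f_{i,j}((1+p)^{1-n} - 1)) = k + 1. -/

import Mathlib

private lemma val_zero_of_norm_one {p : ℕ} [Fact p.Prime] {x : ℚ_[p]} (hx : ‖x‖ = 1) :
    x.valuation = 0 := by
  have hx0 : x ≠ 0 := by
    intro h; rw [h, norm_zero] at hx; exact one_ne_zero hx.symm
  have hp_pos : (0 : ℝ) < p := by exact_mod_cast (Fact.out : p.Prime).pos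
  have hp_ne_one : (p : ℝ) ≠ 1 := by exact_mod_cast (Fact.out : p.Prime).ne_one
  rw [Padic.norm_eq_zpow_neg_valuation hx0] at hx
  have h2 : (p : ℝ) ^ (-x.valuation) = (p : ℝ) ^ (0 : ℤ) := by simpa using hx
  have := (zpow_right_inj₀ hp_pos hp_ne_one).mp h2
  omega

private lemma padicValInt_key (p : ℕ) [Fact p.Prime] (hp : Odd p) (k : ℕ) (s : ℕ)
    (hs : ¬ p ∣ s) (hs0 : s ≠ 0) :
    padicValInt p ((1 + (p : ℤ)) ^ (p ^ k * s) - 1) = k + 1 := by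
  have hprime : p.Prime := Fact.out
  set N : ℕ := p ^ k * s with hN
  have hN0 : N ≠ 0 := Nat.mul_ne_zero (pow_ne_zero _ hprime.ne_zero) hs0
  set M : ℤ := (1 + (p : ℤ)) ^ N - 1 with hM
  have hM0 : M ≠ 0 := by
    have h1 : (1 : ℤ) < 1 + (p : ℤ) := by
      have := hprime.pos; omega
    have : (1 : ℤ) < (1 + (p : ℤ)) ^ N := one_lt_pow₀ h1 hN0
    omega
  have hdvd : (p : ℤ) ∣ (1 + (p : ℤ)) - 1 := by simp
  have hnd : ¬ (p : ℤ) ∣ (1 + (p : ℤ)) := by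
    intro h
    have h1 : (p : ℤ) ∣ 1 := (dvd_add_right (dvd_refl _)).mp (by rwa [add_comm] at h)
    have := Int.le_of_dvd one_pos h1
    have := hprime.two_le
    omega
  have hLTE := Int.emultiplicity_pow_sub_pow hprime hp hdvd hnd N
  rw [one_pow] at hLTE
  have hp_self : emultiplicity ((p : ℤ)) ((1 + (p : ℤ)) - 1) = 1 := by
    have he : (1 + (p : ℤ)) - 1 = (p : ℤ) := by ring
    rw [he]
    exact FiniteMultiplicity.emultiplicity_self
      (Int.finiteMultiplicity_iff.mpr
        ⟨by simpa using hprime.ne_one, by exact_mod_cast hprime.ne_zero⟩)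
  have hpN : emultiplicity p N = (k : ℕ∞) := by
    rw [← padicValNat_eq_emultiplicity hN0]
    norm_cast
    rw [hN, padicValNat.mul (pow_ne_zero _ hprime.ne_zero) hs0, padicValNat.prime_pow,
      padicValNat.eq_zero_of_not_dvd hs, add_zero]
  have hcast : (padicValInt p M : ℕ∞) = emultiplicity ((p : ℕ) : ℤ) M := by
    rw [padicValInt, ← Int.emultiplicity_natAbs]
    exact padicValNat_eq_emultiplicity (Int.natAbs_ne_zero.mpr hM0)
  have hfin : (padicValInt p M : ℕ∞) = ((k + 1 : ℕ) : ℕ∞) := by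
    rw [hcast, hLTE, hp_self, hpN]
    push_cast
    rw [add_comm]
  exact_mod_cast hfin

/-- Let `p` be an odd prime, `n ≡ 1-j (mod p-1)`, `i ≡ j (mod p-1)`, and
`f_{i,j}(T) = T - (1+p)^i + 1`.  If `n + i - 1 = p^k r` with `p ∤ r`, then
`v_p(f_{i,j}((1+p)^{1-n} - 1)) = k + 1` (this is the `p`-adic valuation of
`|π_{2(n+i-1)-1} L_{K(1)} S⁰|`). -/
theorem statement8 (p : ℕ) [Fact p.Prime] (hp : Odd p) (i j n : ℤ)
    (hn : ((p : ℤ) - 1) ∣ (n - (1 - j))) (hi : ((p : ℤ) - 1) ∣ (i - j))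
    (k : ℕ) (r : ℤ) (hr : ¬ (p : ℤ) ∣ r) (hkr : n + i - 1 = (p : ℤ) ^ k * r) :
    (((1 + (p : ℚ_[p])) ^ (1 - n) - 1) - (1 + (p : ℚ_[p])) ^ i + 1).valuation
      = (k : ℤ) + 1 := by
  have hprime : p.Prime := Fact.out
  set u : ℚ_[p] := 1 + (p : ℚ_[p]) with hu
  have hucast : u = ((1 + p : ℕ) : ℚ_[p]) := by rw [hu]; push_cast; ring
  have hu0 : u ≠ 0 := by
    rw [hucast]
    exact Nat.cast_ne_zero.mpr (by omega)
  have hval_u : u.valuation = 0 := by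
    rw [hucast, Padic.valuation_natCast,
      padicValNat.eq_zero_of_not_dvd (by
        intro h
        have h1 : p ∣ 1 := (Nat.dvd_add_right (dvd_refl p)).mp (by rwa [add_comm] at h)
        have := Nat.le_of_dvd one_pos h1
        have := hprime.two_le
        omega : ¬ p ∣ 1 + p)]
    simp
  have hnorm_u : ‖u‖ = 1 := by
    rw [Padic.norm_eq_zpow_neg_valuation hu0, hval_u]; simp
  have hr0 : r ≠ 0 := fun h => hr (h ▸ dvd_zero _)
  set N : ℕ := p ^ k * r.natAbs with hNdef
  have hs : ¬ p ∣ r.natAbs := by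
    intro h
    rw [← Int.natAbs_natCast p] at h
    exact hr (Int.natAbs_dvd_natAbs.mp h)
  have hsnz : r.natAbs ≠ 0 := Int.natAbs_ne_zero.mpr hr0
  have hN0 : N ≠ 0 := Nat.mul_ne_zero (pow_ne_zero _ hprime.ne_zero) hsnz
  -- rewrite the expression as c * (u ^ N - 1) with ‖c‖ = 1
  obtain ⟨c, hc_norm, hc_eq⟩ :
      ∃ c : ℚ_[p], ‖c‖ = 1 ∧ (u ^ (1 - n) - 1) - u ^ i + 1 = c * (u ^ (N : ℤ) - 1) := by
    rcases lt_or_gt_of_ne hr0 with hneg | hpos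
    · -- r < 0 : (N : ℤ) = -(n+i-1), so 1 - n = i + N
      have hNZ : (N : ℤ) = -(n + i - 1) := by
        rw [hkr, hNdef]
        push_cast
        rw [abs_of_neg hneg]
        ring
      refine ⟨u ^ i, by rw [norm_zpow, hnorm_u, one_zpow], ?_⟩
      have he : (1 : ℤ) - n = i + (N : ℤ) := by omega
      rw [he, zpow_add₀ hu0]
      ring
    · -- r > 0 : (N : ℤ) = n+i-1, so 1 - n = i - N
      have hNZ : (N : ℤ) = n + i - 1 := by
        rw [hkr, hNdef]
        push_cast
        rw [abs_of_pos hpos]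
      refine ⟨-(u ^ (i - (N : ℤ))), by rw [norm_neg, norm_zpow, hnorm_u, one_zpow], ?_⟩
      have he : (1 : ℤ) - n = i - (N : ℤ) := by omega
      have hsplit : u ^ i = u ^ (i - (N : ℤ)) * u ^ (N : ℤ) := by
        rw [← zpow_add₀ hu0]
        ring_nf
      rw [he, hsplit]
      ring
  have hc0 : c ≠ 0 := by
    intro h; rw [h, norm_zero] at hc_norm; exact one_ne_zero hc_norm.symm
  set M : ℤ := (1 + (p : ℤ)) ^ N - 1 with hM
  have hM0 : M ≠ 0 := by
    have h1 : (1 : ℤ) < 1 + (p : ℤ) := by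
      have := hprime.pos; omega
    have : (1 : ℤ) < (1 + (p : ℤ)) ^ N := one_lt_pow₀ h1 hN0
    omega
  have huN : u ^ (N : ℤ) - 1 = ((M : ℤ) : ℚ_[p]) := by
    rw [zpow_natCast, hM, hu]
    push_cast
    ring
  have hMQ : ((M : ℤ) : ℚ_[p]) ≠ 0 := Int.cast_ne_zero.mpr hM0
  rw [hc_eq, huN, Padic.valuation_mul hc0 hMQ, val_zero_of_norm_one hc_norm,
    Padic.valuation_intCast, zero_add, hM, hNdef,
    padicValInt_key p hp k r.natAbs hs hsnz]
  push_cast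
  ring
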